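/- Let k be a field, n ≥ 2 an integer, and let f = x0·x1·l2···l_{n-1}·x2 ∈ k[x0,x1,x2] where each l_i is a linear form in the ideal (x0,x1). Then the three partial derivatives ∂f/∂x0, ∂f/∂x1, ∂f/∂x2 are, up to sign, the 2×2 minors of the 3×2 matrix M with first column (x0, x1, −n·x2)ᵀ and second column (0, x1·l2···l_{n-1}, −l2···l_{n-1}·x2 − x1·(∂/∂x1)(l2···l_{n-1})·x2)ᵀ. Specifically: x1·x2·l2···l_{n-1} + x0·x1·x2·(∂/∂x0)(l2···l_{n-1}) equals minus the minor of M omitting the first row, x0·x2·l2···l_{n-1} + x0·x1·x2·(∂/∂x1)(l2···l_{n-1}) equals the minor omitting the second row, and x0·x1·l2···l_{n-1} equals minus the minor omitting the third row. -/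

import Mathlib

open MvPolynomial

lemma euler_aux {k : Type*} [Field k] {m : ℕ} (a b : Fin m → k)
    (s : Finset (Fin m)) :
    X 0 * pderiv (0 : Fin 3) (∏ i ∈ s, (C (a i) * X 0 + C (b i) * X 1))
      + X 1 * pderiv (1 : Fin 3) (∏ i ∈ s, (C (a i) * X 0 + C (b i) * X 1))
      = (s.card : MvPolynomial (Fin 3) k) * ∏ i ∈ s, (C (a i) * X 0 + C (b i) * X 1) := by
  induction s using Finset.induction_on with
  | empty => simp
  | insert x s hx ih =>
    have h0 : pderiv (0 : Fin 3) (C (a x) * X 0 + C (b x) * X 1) = C (a x) := by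
      simp [pderiv_X_of_ne (by decide : (1:Fin 3) ≠ 0)]
    have h1 : pderiv (1 : Fin 3) (C (a x) * X 0 + C (b x) * X 1) = C (b x) := by
      simp [pderiv_X_of_ne (by decide : (0:Fin 3) ≠ 1)]
    rw [Finset.prod_insert hx, Finset.card_insert_of_notMem hx, pderiv_mul, pderiv_mul, h0, h1]
    push_cast
    linear_combination (C (a x) * X 0 + C (b x) * X 1) * ih

lemma pderiv2_aux {k : Type*} [Field k] {m : ℕ} (a b : Fin m → k)
    (s : Finset (Fin m)) :
    pderiv (2 : Fin 3) (∏ i ∈ s, (C (a i) * X 0 + C (b i) * X 1)) = 0 := by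
  induction s using Finset.induction_on with
  | empty => simp
  | insert x s hx ih =>
    rw [Finset.prod_insert hx, pderiv_mul, ih]
    simp [pderiv_X_of_ne (by decide : (0:Fin 3) ≠ 2), pderiv_X_of_ne (by decide : (1:Fin 3) ≠ 2)]

/-- For `f = x0 · x1 · l2⋯l_{n-1} · x2` with each `l_i` a linear form in `(x0, x1)`,
the three partial derivatives of `f` are, up to sign, the `2×2` minors of the matrix `M`
with first column `(x0, x1, -n·x2)ᵀ` and second column
`(0, x1·q, -q·x2 - x1·(∂q/∂x1)·x2)ᵀ`, where `q = l2⋯l_{n-1}`. -/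
theorem stmt0 {k : Type*} [Field k] (n : ℕ) (hn : 2 ≤ n)
    (a b : Fin (n - 2) → k)
    (q f : MvPolynomial (Fin 3) k)
    (hq : q = ∏ i, (C (a i) * X 0 + C (b i) * X 1))
    (hf : f = X 0 * X 1 * q * X 2) :
    -- partial derivative in x0 : (up to sign) the minor omitting the first row
    pderiv (0 : Fin 3) f
      = X 1 * (-(q * X 2) - X 1 * pderiv (1 : Fin 3) q * X 2)
        - (X 1 * q) * (-((n : MvPolynomial (Fin 3) k) * X 2)) ∧
    -- partial derivative in x1 : (up to sign) the minor omitting the second row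
    pderiv (1 : Fin 3) f
      = -(X 0 * (-(q * X 2) - X 1 * pderiv (1 : Fin 3) q * X 2)
          - 0 * (-((n : MvPolynomial (Fin 3) k) * X 2))) ∧
    -- partial derivative in x2 : (up to sign) the minor omitting the third row
    pderiv (2 : Fin 3) f = X 0 * (X 1 * q) - 0 * X 1 := by
  have euler : X 0 * pderiv (0 : Fin 3) q + X 1 * pderiv (1 : Fin 3) q
      = ((n - 2 : ℕ) : MvPolynomial (Fin 3) k) * q := by
    rw [hq]
    simpa using euler_aux a b Finset.univ
  have h2 : pderiv (2 : Fin 3) q = 0 := by rw [hq]; exact pderiv2_aux a b Finset.univ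
  have hcast : ((n : ℕ) : MvPolynomial (Fin 3) k) = ((n - 2 : ℕ) : MvPolynomial (Fin 3) k) + 2 := by
    have : n = (n - 2) + 2 := by omega
    rw [this]; push_cast; ring
  subst hf
  simp only [pderiv_mul, pderiv_X, Pi.single_eq_same, h2,
    pderiv_X_of_ne (by decide : (1:Fin 3) ≠ 0), pderiv_X_of_ne (by decide : (0:Fin 3) ≠ 1),
    pderiv_X_of_ne (by decide : (2:Fin 3) ≠ 0), pderiv_X_of_ne (by decide : (2:Fin 3) ≠ 1),
    pderiv_X_of_ne (by decide : (0:Fin 3) ≠ 2), pderiv_X_of_ne (by decide : (1:Fin 3) ≠ 2)]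
  refine ⟨?_, by ring, by ring⟩
  rw [hcast]
  linear_combination X 1 * X 2 * euler
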